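/- For every n ≥ 2, the independence polynomial of the well-covered spider S_n satisfies I(S_n;x) = (1+x)·(1 + Σ_{k=1}^{n} [C(n,k)·2^k + C(n−1,k−1)]·x^k), it is unimodal, and its mode is unique and equals 1 + ((n−1) mod 3) + 2(⌈n/3⌉ − 1). -/

import Mathlib

open Polynomial
open scoped Classical

/-- The independence polynomial of a finite simple graph: the coefficient of `x^k`
is the number of independent (stable) sets of cardinality `k`. -/
noncomputable def indepPoly {V : Type*} [Fintype V] (G : SimpleGraph V) : Polynomial ℤ :=
  ∑ s ∈ Finset.univ.powerset.filter
      (fun s : Finset V => ∀ u ∈ s, ∀ v ∈ s, ¬ G.Adj u v),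
    Polynomial.X ^ s.card

/-- A polynomial is unimodal if its coefficient sequence increases up to some
index `k` and decreases afterwards. -/
def Unimodal (p : Polynomial ℤ) : Prop :=
  ∃ k : ℕ, (∀ i j : ℕ, i ≤ j → j ≤ k → p.coeff i ≤ p.coeff j) ∧
    (∀ i j : ℕ, k ≤ i → i ≤ j → p.coeff j ≤ p.coeff i)

/-- A finset of vertices is independent (stable) if no two of its members are adjacent. -/
def IndepFinset {V : Type*} (G : SimpleGraph V) (s : Finset V) : Prop :=
  ∀ u ∈ s, ∀ v ∈ s, ¬ G.Adj u v

/-- A maximal independent set. -/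
def MaximalIndepFinset {V : Type*} (G : SimpleGraph V) (s : Finset V) : Prop :=
  IndepFinset G s ∧ ∀ u, u ∉ s → ¬ IndepFinset G (insert u s)

/-- A graph is well-covered if all its maximal independent sets have the same cardinality. -/
def WellCovered {V : Type*} [Fintype V] (G : SimpleGraph V) : Prop :=
  ∀ s t : Finset V, MaximalIndepFinset G s → MaximalIndepFinset G t → s.card = t.card

/-- The stability number `α(G)`: maximum size of an independent set. -/
noncomputable def alpha {V : Type*} [Fintype V] (G : SimpleGraph V) : ℕ :=
  (Finset.univ.powerset.filter (fun s : Finset V => IndepFinset G s)).sup Finset.card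

/-- A vertex is simplicial if its neighborhood induces a complete subgraph. -/
def Simplicial {V : Type*} (G : SimpleGraph V) (v : V) : Prop :=
  ∀ u w, G.Adj v u → G.Adj v w → u ≠ w → G.Adj u w

/-- A graph is claw-free if it has no induced subgraph isomorphic to `K_{1,3}`. -/
def ClawFree {V : Type*} (G : SimpleGraph V) : Prop :=
  ∀ c x y z : V, G.Adj c x → G.Adj c y → G.Adj c z →
    x ≠ y → x ≠ z → y ≠ z → ¬ G.Adj x y → ¬ G.Adj x z → ¬ G.Adj y z → False

/-- Disjoint union of two simple graphs. -/
def disjUnion {V W : Type*} (G : SimpleGraph V) (H : SimpleGraph W) : SimpleGraph (V ⊕ W) :=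
  SimpleGraph.fromRel (fun x y =>
    (∃ a b, x = Sum.inl a ∧ y = Sum.inl b ∧ G.Adj a b) ∨
    (∃ a b, x = Sum.inr a ∧ y = Sum.inr b ∧ H.Adj a b))

/-- The edge-join `(G;v) ⊖ (H;w)`: disjoint union of `G` and `H` plus the edge `vw`. -/
def edgeJoin {V W : Type*} (G : SimpleGraph V) (v : V) (H : SimpleGraph W) (w : W) :
    SimpleGraph (V ⊕ W) :=
  SimpleGraph.fromRel (fun x y =>
    (∃ a b, x = Sum.inl a ∧ y = Sum.inl b ∧ G.Adj a b) ∨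
    (∃ a b, x = Sum.inr a ∧ y = Sum.inr b ∧ H.Adj a b) ∨
    (x = Sum.inl v ∧ y = Sum.inr w))

/-- The triangle chain `△_n = K_3 ⊖ (n-1)K_3` on vertices `v_1, ..., v_{3n}`
(0-indexed here: vertex `k` is `v_{k+1}`): triangles `{3i, 3i+1, 3i+2}` together with
bridge edges joining vertex `3i+1` to vertex `3i+3`. -/
def triChain (n : ℕ) : SimpleGraph (Fin (3 * n)) :=
  SimpleGraph.fromRel (fun x y =>
    ((x : ℕ) / 3 = (y : ℕ) / 3) ∨ (∃ i, (x : ℕ) = 3 * i + 1 ∧ (y : ℕ) = 3 * i + 3))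

/-- The centipede `W_n`: vertices `a_i = Sum.inl i` and `b_i = Sum.inr i`, with
edges `a_i b_i` and `b_i b_{i+1}`. -/
def centipede (n : ℕ) : SimpleGraph (Fin n ⊕ Fin n) :=
  SimpleGraph.fromRel (fun x y =>
    (∃ i, x = Sum.inl i ∧ y = Sum.inr i) ∨
    (∃ i j : Fin n, x = Sum.inr i ∧ y = Sum.inr j ∧ (i : ℕ) + 1 = (j : ℕ)))

/-- The well-covered spider `S_n`: vertices `a_i = Sum.inl i`, `b_i = Sum.inr i`
(`0 ≤ i ≤ n`), with edges `a_i b_i` for all `i` and `b_0 b_i` for `i ≠ 0`. -/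
def spider (n : ℕ) : SimpleGraph (Fin (n + 1) ⊕ Fin (n + 1)) :=
  SimpleGraph.fromRel (fun x y =>
    (∃ i, x = Sum.inl i ∧ y = Sum.inr i) ∨
    (∃ i, x = Sum.inr 0 ∧ y = Sum.inr i ∧ i ≠ 0))

/-- The path `P_4` on vertices `a = 0`, `b = 1`, `c = 2`, `d = 3`. -/
def P4 : SimpleGraph (Fin 4) :=
  SimpleGraph.fromRel (fun x y =>
    (x = 0 ∧ y = 1) ∨ (x = 1 ∧ y = 2) ∨ (x = 2 ∧ y = 3))

/-- `G_{2,4} = (W_2; b_2) ⊖ (W_4; v_2)`. -/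
def G24 : SimpleGraph ((Fin 2 ⊕ Fin 2) ⊕ (Fin 4 ⊕ Fin 4)) :=
  edgeJoin (centipede 2) (Sum.inr 1) (centipede 4) (Sum.inr 1)


-- ===== auxiliary lemmas =====

lemma choose_id (n k : ℕ) :
    n.choose (k+2) * ((k+2)*(k+1)) = n.choose k * ((n-k) * (n-k-1)) := by
  have h1 := Nat.choose_succ_right_eq n (k+1)
  have h2 := Nat.choose_succ_right_eq n k
  calc n.choose (k+2) * ((k+2)*(k+1)) = (n.choose (k+2) * (k+2)) * (k+1) := by ring
    _ = n.choose (k+1) * (n - (k+1)) * (k+1) := by rw [h1]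
    _ = (n.choose (k+1) * (k+1)) * (n - (k+1)) := by ring
    _ = n.choose k * (n-k) * (n - (k+1)) := by rw [h2]
    _ = n.choose k * ((n-k) * (n-k-1)) := by rw [Nat.sub_sub]; ring

lemma inc_lemma (n k : ℕ) (h2 : 3*(k+1) ≤ 2*n) :
    n.choose k * 2^k + n.choose k < n.choose (k+2) * 2^(k+2) + n.choose (k+1) := by
  obtain ⟨d, rfl⟩ : ∃ d, n = k + 2 + d := ⟨n - (k+2), by omega⟩
  set n := k + 2 + d with hn
  have hid : n.choose (k+2) * ((k+2)*(k+1)) = n.choose k * ((d+2) * (d+1)) := by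
    have := choose_id n k
    have e1 : n - k = d + 2 := by omega
    have e2 : n - k - 1 = d + 1 := by omega
    rw [e2, e1] at this; exact this
  have hkd : k ≤ 2*d + 1 := by omega
  have hprod : (k+1)*(k+3) ≤ 4*((d+2)*(d+1)) := by nlinarith
  have hkey : n.choose k * (k+3) ≤ n.choose (k+2) * (4*(k+2)) := by
    have h3 : n.choose k * ((k+1)*(k+3)) ≤ n.choose (k+2) * (4*(k+2)*(k+1)) := by
      calc n.choose k * ((k+1)*(k+3)) ≤ n.choose k * (4*((d+2)*(d+1))) :=
            Nat.mul_le_mul_left _ hprod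
        _ = 4 * (n.choose k * ((d+2)*(d+1))) := by ring
        _ = 4 * (n.choose (k+2) * ((k+2)*(k+1))) := by rw [hid]
        _ = n.choose (k+2) * (4*(k+2)*(k+1)) := by ring
    exact Nat.le_of_mul_le_mul_right
      (by linarith [h3] : n.choose k * (k+3) * (k+1) ≤ n.choose (k+2) * (4*(k+2)) * (k+1))
      (by omega : 0 < k+1)
  have hc1 : 1 ≤ n.choose (k+1) := Nat.choose_pos (by omega)
  have hc0 : 1 ≤ n.choose k := Nat.choose_pos (by omega)
  have hA : (k+2) * (n.choose (k+2) * 2^(k+2)) ≥ (k+2) * (n.choose k * 2^k) + 2^k * (n.choose k) := by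
    have h4 : n.choose k * (k+3) * 2^k ≤ n.choose (k+2) * (4*(k+2)) * 2^k :=
      Nat.mul_le_mul_right _ hkey
    calc (k+2) * (n.choose (k+2) * 2^(k+2)) = n.choose (k+2) * (4*(k+2)) * 2^k := by ring
      _ ≥ n.choose k * (k+3) * 2^k := h4
      _ = (k+2) * (n.choose k * 2^k) + 2^k * (n.choose k) := by ring
  have hlast : (k+2) * n.choose k < 2^k * n.choose k + (k+2) * n.choose (k+1) := by
    rcases Nat.lt_or_ge k 2 with hk | hk
    · interval_cases k
      · simp [Nat.choose_one_right]; omega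
      · have hb : d + 2 ≤ n.choose 2 := by
          rw [Nat.choose_two_right]
          have e1 : n - 1 = d + 2 := by omega
          rw [e1, Nat.le_div_iff_mul_le (by norm_num)]
          nlinarith
        norm_num [Nat.choose_one_right] at *
        omega
    · have h2k : k + 2 ≤ 2^k := by
        have hh : k ≤ 2^(k-1) := by
          have := @Nat.lt_two_pow_self (k-1)
          omega
        calc k + 2 ≤ 2*k := by omega
          _ ≤ 2*2^(k-1) := by omega
          _ = 2^(k-1+1) := by ring
          _ = 2^k := by congr 1; omega
      have h5 : (k+2) * n.choose k ≤ 2^k * n.choose k := Nat.mul_le_mul_right _ h2k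
      have hpos : 0 < (k+2) * n.choose (k+1) := by positivity
      omega
  have hfin : (k+2) * (n.choose k * 2^k + n.choose k) < (k+2) * (n.choose (k+2) * 2^(k+2) + n.choose (k+1)) := by
    calc (k+2) * (n.choose k * 2^k + n.choose k)
        = (k+2)*(n.choose k * 2^k) + (k+2)* n.choose k := by ring
      _ < (k+2)*(n.choose k * 2^k) + (2^k * n.choose k + (k+2)*n.choose (k+1)) := by omega
      _ ≤ (k+2) * (n.choose (k+2) * 2^(k+2)) + (k+2)*n.choose (k+1) := by omega
      _ = (k+2) * (n.choose (k+2) * 2^(k+2) + n.choose (k+1)) := by ring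
  exact Nat.lt_of_mul_lt_mul_left hfin


lemma choose_id_dup' (n k : ℕ) :
    n.choose (k+2) * ((k+2)*(k+1)) = n.choose k * ((n-k) * (n-k-1)) := by
  have h1 := Nat.choose_succ_right_eq n (k+1)
  have h2 := Nat.choose_succ_right_eq n k
  calc n.choose (k+2) * ((k+2)*(k+1)) = (n.choose (k+2) * (k+2)) * (k+1) := by ring
    _ = n.choose (k+1) * (n - (k+1)) * (k+1) := by rw [h1]
    _ = (n.choose (k+1) * (k+1)) * (n - (k+1)) := by ring
    _ = n.choose k * (n-k) * (n - (k+1)) := by rw [h2]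
    _ = n.choose k * ((n-k) * (n-k-1)) := by rw [Nat.sub_sub]; ring

lemma dec_lemma (n k : ℕ) (h2 : 2*n + 1 ≤ 3*(k+1)) (hkn : k ≤ n) :
    n.choose (k+2) * 2^(k+2) + n.choose (k+1) + 1 ≤ n.choose k * 2^k + n.choose k := by
  rcases Nat.lt_or_ge n (k+1) with hk | hk
  · -- k = n
    have hkn' : k = n := by omega
    subst hkn'
    have z1 : k.choose (k+2) = 0 := Nat.choose_eq_zero_of_lt (by omega)
    have z2 : k.choose (k+1) = 0 := Nat.choose_eq_zero_of_lt (by omega)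
    have : 1 ≤ k.choose k := Nat.choose_pos le_rfl
    have : 1 ≤ 2^k := Nat.one_le_two_pow
    rw [z1, z2]
    nlinarith [Nat.choose_pos (le_refl k)]
  · obtain ⟨d, rfl⟩ : ∃ d, n = k + 1 + d := ⟨n - (k+1), by omega⟩
    set n := k + 1 + d with hn
    have hid : n.choose (k+2) * ((k+2)*(k+1)) = n.choose k * ((d+1) * d) := by
      have := choose_id_dup' n k
      have e1 : n - k = d + 1 := by omega
      have e2 : n - k - 1 = d := by omega
      rw [e2, e1] at this; exact this
    have hkd : 2*d ≤ k := by omega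
    have hprod : 4*((d+1)*d) ≤ (k+2)*k := by nlinarith
    have hkey : n.choose (k+2) * (4*(k+1)) ≤ n.choose k * k := by
      have h3 : n.choose (k+2) * (4*(k+1)*(k+2)) ≤ n.choose k * (k*(k+2)) := by
        calc n.choose (k+2) * (4*(k+1)*(k+2)) = 4 * (n.choose (k+2) * ((k+2)*(k+1))) := by ring
          _ = 4 * (n.choose k * ((d+1)*d)) := by rw [hid]
          _ = n.choose k * (4*((d+1)*d)) := by ring
          _ ≤ n.choose k * ((k+2)*k) := Nat.mul_le_mul_left _ hprod
          _ = n.choose k * (k*(k+2)) := by ring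
      exact Nat.le_of_mul_le_mul_right
        (by linarith [h3] : n.choose (k+2) * (4*(k+1)) * (k+2) ≤ n.choose k * k * (k+2))
        (by omega : 0 < k+2)
    have hCC : n.choose (k+1) ≤ n.choose k := by
      have h4 := Nat.choose_succ_right_eq n k
      have e1 : n - k = d + 1 := by omega
      rw [e1] at h4
      have h5 : n.choose (k+1) * (k+1) ≤ n.choose k * (k+1) := by
        rw [h4]; exact Nat.mul_le_mul_left _ (by omega)
      exact Nat.le_of_mul_le_mul_right h5 (by omega)
    have hc0 : 1 ≤ n.choose k := Nat.choose_pos (by omega)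
    have h2k : k + 1 ≤ 2^k := by
      have := @Nat.lt_two_pow_self k
      rcases Nat.eq_zero_or_pos k with rfl | hkpos
      · norm_num
      · have := @Nat.lt_two_pow_self (k-1)
        have hh : k ≤ 2^(k-1) := by omega
        calc k + 1 ≤ 2*k := by omega
          _ ≤ 2*2^(k-1) := by omega
          _ = 2^(k-1+1) := by ring
          _ = 2^k := by congr 1; omega
    have hfin : (k+1) * (n.choose (k+2) * 2^(k+2) + n.choose (k+1) + 1)
        ≤ (k+1) * (n.choose k * 2^k + n.choose k) := by
      calc (k+1) * (n.choose (k+2) * 2^(k+2) + n.choose (k+1) + 1)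
          = n.choose (k+2) * (4*(k+1)) * 2^k + (k+1)*n.choose (k+1) + (k+1) := by ring
        _ ≤ n.choose k * k * 2^k + (k+1)*n.choose k + (k+1) := by
            have := Nat.mul_le_mul_right (2^k) hkey
            have := Nat.mul_le_mul_left (k+1) hCC
            omega
        _ ≤ n.choose k * k * 2^k + (k+1)*n.choose k + 2^k * n.choose k := by
            have : k+1 ≤ 2^k * n.choose k := le_trans h2k (by
              calc 2^k = 2^k * 1 := by ring
                _ ≤ 2^k * n.choose k := Nat.mul_le_mul_left _ hc0)
            omega
        _ = (k+1) * (n.choose k * 2^k + n.choose k) := by ring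
    exact Nat.le_of_mul_le_mul_left hfin (by omega)

lemma dec_lemma' (n k : ℕ) (h2 : 2*n + 1 ≤ 3*(k+1)) :
    n.choose (k+2) * 2^(k+2) + n.choose (k+1) ≤ n.choose k * 2^k + n.choose k := by
  rcases le_or_gt k n with h | h
  · have := dec_lemma n k h2 h; omega
  · have z1 : n.choose (k+2) = 0 := Nat.choose_eq_zero_of_lt (by omega)
    have z2 : n.choose (k+1) = 0 := Nat.choose_eq_zero_of_lt (by omega)
    simp [z1, z2]

lemma indep_iff (n : ℕ) (s : Finset (Fin (n+1) ⊕ Fin (n+1))) :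
    (∀ u ∈ s, ∀ v ∈ s, ¬ (spider n).Adj u v) ↔
    ((∀ i, ¬(Sum.inl i ∈ s ∧ Sum.inr i ∈ s)) ∧
      (Sum.inr 0 ∈ s → ∀ i, i ≠ 0 → Sum.inr i ∉ s)) := by
  constructor
  · intro h
    constructor
    · rintro i ⟨h1, h2⟩
      exact h _ h1 _ h2 (by simp [spider, SimpleGraph.fromRel_adj])
    · intro h0 i hi hin
      refine h _ h0 _ hin ?_
      have : (0 : Fin (n+1)) ≠ i := fun h' => hi h'.symm
      simp [spider, SimpleGraph.fromRel_adj, this, hi]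
  · rintro ⟨h1, h2⟩ u hu v hv hadj
    rw [spider, SimpleGraph.fromRel_adj] at hadj
    obtain ⟨hne, hr | hr⟩ := hadj <;>
      rcases hr with ⟨i, rfl, rfl⟩ | ⟨i, rfl, rfl, hi⟩
    · exact h1 i ⟨hu, hv⟩
    · exact h2 hu i hi hv
    · exact h1 i ⟨hv, hu⟩
    · exact h2 hv i hi hu

lemma sum_powerset_pow (m : ℕ) :
    ∑ A ∈ (Finset.univ : Finset (Fin m)).powerset, (X : Polynomial ℤ)^A.card
      = (1 + X)^m := by
  have h := Finset.prod_add (fun _ : Fin m => (X : Polynomial ℤ)) (fun _ => 1) Finset.univ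
  simp only [Finset.prod_const, one_pow, mul_one, Finset.card_univ,
    Fintype.card_fin] at h
  rw [← h, add_comm]

lemma spider_j_i (n : ℕ) (s : Finset (Fin (n+1) ⊕ Fin (n+1)))
    (hindep : (∀ i, ¬(Sum.inl i ∈ s ∧ Sum.inr i ∈ s)) ∧
      (Sum.inr 0 ∈ s → ∀ i, i ≠ 0 → Sum.inr i ∉ s))
    (h0 : Sum.inr 0 ∈ s) :
    insert (Sum.inr 0)
      ((Finset.univ.filter (fun i : Fin n => Sum.inl i.succ ∈ s)).image
        (fun i : Fin n => (Sum.inl i.succ : Fin (n+1) ⊕ Fin (n+1)))) = s := by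
  ext v
  simp only [Finset.mem_insert, Finset.mem_image, Finset.mem_filter, Finset.mem_univ, true_and]
  rcases v with a | a
  · constructor
    · rintro (h | ⟨b, hb, heq⟩)
      · exact absurd h (by simp)
      · rw [← Sum.inl.inj heq]; exact hb
    · intro ha
      have hane : a ≠ 0 := by
        rintro rfl
        exact hindep.1 0 ⟨ha, h0⟩
      right
      exact ⟨a.pred hane, by rwa [Fin.succ_pred], by rw [Fin.succ_pred]⟩
  · constructor
    · rintro (h | ⟨b, _, hb⟩)
      · simp only [Sum.inr.injEq] at h
        rw [h]; exact h0
      · exact absurd hb (by simp)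
    · intro ha
      left
      by_contra hne
      have hane : a ≠ 0 := fun h => hne (by rw [h])
      exact hindep.2 h0 a hane ha

lemma partA (n : ℕ) (D : Finset (Finset (Fin (n+1) ⊕ Fin (n+1))))
    (hD : ∀ s, s ∈ D ↔
      (((∀ i, ¬(Sum.inl i ∈ s ∧ Sum.inr i ∈ s)) ∧
        (Sum.inr 0 ∈ s → ∀ i, i ≠ 0 → Sum.inr i ∉ s)) ∧ Sum.inr 0 ∈ s)) :
    ∑ s ∈ D, (X : Polynomial ℤ)^s.card = X * (1 + X)^n := by
  rw [← sum_powerset_pow n, Finset.mul_sum]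
  refine Finset.sum_nbij'
    (i := fun s => Finset.univ.filter (fun i : Fin n => Sum.inl i.succ ∈ s))
    (j := fun A => insert (Sum.inr 0)
      (A.image (fun i : Fin n => (Sum.inl i.succ : Fin (n+1) ⊕ Fin (n+1)))))
    ?_ ?_ ?_ ?_ ?_
  · intro s _
    simp [Finset.mem_powerset, Finset.filter_subset]
  · intro A _
    rw [hD]
    refine ⟨?_, Finset.mem_insert_self _ _⟩
    constructor
    · rintro i ⟨hl, hr⟩
      simp only [Finset.mem_insert, Finset.mem_image] at hl hr
      rcases hr with h | ⟨b, _, hb⟩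
      · -- inr i = inr 0, so i = 0; but inl 0 can't be in the set
        rcases hl with h' | ⟨b, _, hb'⟩
        · exact absurd h' (by simp)
        · have : i = 0 := by simpa using h
          rw [this] at hb'
          exact (Fin.succ_ne_zero b) (by simpa using hb')
      · exact absurd hb (by simp)
    · intro _ i hi hmem
      simp only [Finset.mem_insert, Finset.mem_image] at hmem
      rcases hmem with h | ⟨b, _, hb⟩
      · exact hi (by simpa using h)
      · exact absurd hb (by simp)
  · intro s hs
    obtain ⟨hindep, h0⟩ := (hD s).mp hs
    exact spider_j_i n s hindep h0
  · intro A _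
    ext b
    simp only [Finset.mem_filter, Finset.mem_univ, true_and, Finset.mem_insert, Finset.mem_image]
    constructor
    · rintro (h | ⟨c, hc, hcb⟩)
      · exact absurd h (by simp)
      · have : c = b := by
          have := Sum.inl.inj hcb
          exact Fin.succ_injective _ this
        rwa [← this]
    · intro hb
      exact Or.inr ⟨b, hb, rfl⟩
  · intro s hs
    obtain ⟨hindep, h0⟩ := (hD s).mp hs
    have hcard : s.card
        = (Finset.univ.filter (fun i : Fin n => Sum.inl i.succ ∈ s)).card + 1 := by
      conv_lhs => rw [← spider_j_i n s hindep h0]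
      rw [Finset.card_insert_of_notMem (by simp), Finset.card_image_of_injective _
        (show Function.Injective (fun i : Fin n => (Sum.inl i.succ : Fin (n+1) ⊕ Fin (n+1))) from
          fun a b h => Fin.succ_injective n (Sum.inl.inj h))]
    rw [hcard, pow_succ]
    ring

lemma partB (n : ℕ) (D : Finset (Finset (Fin (n+1) ⊕ Fin (n+1))))
    (hD : ∀ s, s ∈ D ↔
      (((∀ i, ¬(Sum.inl i ∈ s ∧ Sum.inr i ∈ s)) ∧
        (Sum.inr 0 ∈ s → ∀ i, i ≠ 0 → Sum.inr i ∉ s)) ∧ ¬ Sum.inr 0 ∈ s)) :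
    ∑ s ∈ D, (X : Polynomial ℤ)^s.card = (1 + X) * (1 + 2*X)^n := by
  classical
  set t : Fin (n+1) → Finset (Fin 3) := fun i => if i = 0 then {0,1} else Finset.univ with ht
  set w : Fin 3 → ℕ := fun j => if j = 0 then 0 else 1 with hw
  have hRHS : (1 + X) * (1 + 2*X)^n
      = ∑ f ∈ Fintype.piFinset t, (X : Polynomial ℤ) ^ (∑ i, w (f i)) := by
    have h1 : ∏ i : Fin (n+1), (∑ j ∈ t i, (X : Polynomial ℤ)^(w j))
        = ∑ f ∈ Fintype.piFinset t, ∏ i, (X : Polynomial ℤ)^(w (f i)) :=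
      Finset.prod_univ_sum t _
    have h2 : ∀ f : Fin (n+1) → Fin 3,
        ∏ i, (X : Polynomial ℤ)^(w (f i)) = (X : Polynomial ℤ) ^ (∑ i, w (f i)) := by
      intro f
      rw [← Finset.prod_pow_eq_pow_sum]
    rw [← Finset.sum_congr rfl (fun f _ => h2 f), ← h1]
    rw [Fin.prod_univ_succ]
    have ht0 : t 0 = {0, 1} := by simp [ht]
    have hts : ∀ i : Fin n, t i.succ = Finset.univ := by
      intro i; simp [ht, Fin.succ_ne_zero]
    have e0 : (∑ j ∈ t 0, (X : Polynomial ℤ)^(w j)) = 1 + X := by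
      rw [ht0, Finset.sum_pair (by decide : (0 : Fin 3) ≠ 1)]
      simp [hw]
    have e1 : ∀ i : Fin n, (∑ j ∈ t i.succ, (X : Polynomial ℤ)^(w j)) = 1 + 2*X := by
      intro i
      rw [hts i, Fin.sum_univ_three]
      simp [hw]
      ring
    rw [e0, Finset.prod_congr rfl (fun i _ => e1 i), Finset.prod_const, Finset.card_univ,
      Fintype.card_fin]
  rw [hRHS]
  refine Finset.sum_nbij'
    (i := fun s => fun i : Fin (n+1) =>
      if Sum.inl i ∈ s then (1 : Fin 3) else if Sum.inr i ∈ s then 2 else 0)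
    (j := fun f => Finset.univ.filter
      (fun v : Fin (n+1) ⊕ Fin (n+1) =>
        Sum.elim (fun i => f i = 1) (fun i => f i = 2) v))
    ?_ ?_ ?_ ?_ ?_
  · -- maps into piFinset t
    intro s hs
    obtain ⟨-, h0⟩ := (hD s).mp hs
    rw [Fintype.mem_piFinset]
    intro i
    by_cases hi : i = 0
    · subst hi
      simp only [ht, if_pos rfl]
      by_cases h : Sum.inl (0 : Fin (n+1)) ∈ s
      · simp [h]
      · simp [h, h0]
    · simp [ht, hi]
  · -- j maps into the filtered set
    intro f hf
    rw [Fintype.mem_piFinset] at hf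
    have hf0 : f 0 ≠ 2 := by
      have := hf 0
      simp only [ht, if_pos rfl] at this
      simp only [Finset.mem_insert, Finset.mem_singleton] at this
      rcases this with h | h <;> simp [h] <;> decide
    rw [hD]
    refine ⟨?_, ?_⟩
    · constructor
      · rintro i ⟨hl, hr⟩
        simp only [Finset.mem_filter, Finset.mem_univ, true_and, Sum.elim_inl,
          Sum.elim_inr] at hl hr
        rw [hl] at hr
        exact absurd hr (by decide)
      · intro h0 i _ hm
        simp only [Finset.mem_filter, Finset.mem_univ, true_and, Sum.elim_inr] at h0
        exact hf0 h0
    · simp only [Finset.mem_filter, Finset.mem_univ, true_and, Sum.elim_inr]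
      exact hf0
  · -- j ∘ i = id
    intro s hs
    obtain ⟨hindep, -⟩ := (hD s).mp hs
    ext v
    simp only [Finset.mem_filter, Finset.mem_univ, true_and]
    rcases v with a | a
    · simp only [Sum.elim_inl]
      by_cases h : Sum.inl a ∈ s
      · simp [h]
      · simp only [if_neg h]
        constructor
        · intro hh
          by_cases h' : Sum.inr a ∈ s
          · rw [if_pos h'] at hh; exact absurd hh (by decide)
          · rw [if_neg h'] at hh; exact absurd hh (by decide)
        · intro hh; exact absurd hh h
    · simp only [Sum.elim_inr]
      by_cases h : Sum.inl a ∈ s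
      · simp only [if_pos h]
        constructor
        · intro hh; exact absurd hh (by decide)
        · intro hh; exact absurd ⟨h, hh⟩ (hindep.1 a)
      · simp only [if_neg h]
        by_cases h' : Sum.inr a ∈ s
        · simp [h']
        · simp only [if_neg h']
          constructor
          · intro hh; exact absurd hh (by decide)
          · intro hh; exact absurd hh h'
  · -- i ∘ j = id
    intro f hf
    funext i
    have h3 : f i = 0 ∨ f i = 1 ∨ f i = 2 := by
      rcases f i with ⟨v, hv⟩
      interval_cases v <;> simp [Fin.ext_iff]
    simp only [Finset.mem_filter, Finset.mem_univ, true_and, Sum.elim_inl, Sum.elim_inr]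
    rcases h3 with h | h | h
    · rw [if_neg (by rw [h]; decide), if_neg (by rw [h]; decide), h]
    · rw [if_pos h, h]
    · rw [if_neg (by rw [h]; decide), if_pos h, h]
  · -- weights agree
    intro s hs
    obtain ⟨hindep, -⟩ := (hD s).mp hs
    congr 1
    have hcard : s.card = ∑ v : Fin (n+1) ⊕ Fin (n+1), if v ∈ s then 1 else 0 := by
      rw [Finset.sum_ite_mem, Finset.univ_inter, Finset.card_eq_sum_ones]
    rw [hcard, Fintype.sum_sum_type]
    have hpt : ∀ i : Fin (n+1),
        w (if Sum.inl i ∈ s then (1 : Fin 3) else if Sum.inr i ∈ s then 2 else 0)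
          = (if Sum.inl i ∈ s then 1 else 0) + (if Sum.inr i ∈ s then 1 else 0) := by
      intro i
      by_cases h : Sum.inl i ∈ s
      · have h' : Sum.inr i ∉ s := fun hh => hindep.1 i ⟨h, hh⟩
        simp [h, h', hw]
      · by_cases h' : Sum.inr i ∈ s
        · simp [h, h', hw]
        · simp [h, h', hw]
    rw [Finset.sum_congr rfl (fun i _ => hpt i), Finset.sum_add_distrib]

lemma indepPoly_spider (n : ℕ) :
    indepPoly (spider n) = (1 + X) * (1 + 2*X)^n + X * (1 + X)^n := by
  rw [indepPoly]
  rw [← Finset.sum_filter_add_sum_filter_not _ (fun s => Sum.inr 0 ∈ s)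
    (fun s : Finset (Fin (n+1) ⊕ Fin (n+1)) => (X : Polynomial ℤ) ^ s.card)]
  refine Eq.trans (congrArg₂ (fun a b : Polynomial ℤ => a + b)
    (partA n _ ?_) (partB n _ ?_)) (by ring)
  · intro s
    simp only [Finset.mem_filter, Finset.mem_powerset, indep_iff]
    constructor
    · rintro ⟨⟨-, h⟩, h'⟩; exact ⟨h, h'⟩
    · rintro ⟨h, h'⟩; exact ⟨⟨Finset.subset_univ _, h⟩, h'⟩
  · intro s
    simp only [Finset.mem_filter, Finset.mem_powerset, indep_iff]
    constructor
    · rintro ⟨⟨-, h⟩, h'⟩; exact ⟨h, h'⟩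
    · rintro ⟨h, h'⟩; exact ⟨⟨Finset.subset_univ _, h⟩, h'⟩


-- expansion of (1+2X)^n
lemma exp_two (n : ℕ) : ((1 : Polynomial ℤ) + 2*X)^n
    = ∑ k ∈ Finset.range (n+1), Polynomial.C ((n.choose k * 2^k : ℕ) : ℤ) * X^k := by
  rw [show ((1 : Polynomial ℤ) + 2*X) = 2*X + 1 by ring, add_pow]
  refine Finset.sum_congr rfl (fun k hk => ?_)
  simp only [Nat.cast_mul, Nat.cast_pow, map_mul, map_pow, Polynomial.C_eq_natCast,
    Nat.cast_ofNat, map_ofNat]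
  push_cast
  ring

lemma exp_one (n : ℕ) : ((1 : Polynomial ℤ) + X)^n
    = ∑ k ∈ Finset.range (n+1), Polynomial.C ((n.choose k : ℕ) : ℤ) * X^k := by
  rw [show ((1 : Polynomial ℤ) + X) = X + 1 by ring, add_pow]
  refine Finset.sum_congr rfl (fun k hk => ?_)
  simp only [Nat.cast_mul, Nat.cast_pow, map_mul, map_pow, Polynomial.C_eq_natCast,
    Nat.cast_ofNat, map_ofNat]
  push_cast
  ring

lemma coeff_sum_CX (m : ℕ) (c : ℕ → ℕ) (j : ℕ) (hc : ∀ i, m < i → c i = 0) :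
    (∑ k ∈ Finset.range (m+1), Polynomial.C ((c k : ℕ) : ℤ) * X^k).coeff j = (c j : ℤ) := by
  rw [Polynomial.finset_sum_coeff]
  simp only [Polynomial.coeff_C_mul, Polynomial.coeff_X_pow]
  rcases Nat.lt_or_ge j (m+1) with h | h
  · rw [Finset.sum_eq_single_of_mem j (Finset.mem_range.mpr h)]
    · simp
    · intro b _ hbj
      simp [Ne.symm hbj]
  · rw [Finset.sum_eq_zero, hc j (by omega)]
    · simp
    · intro b hb
      have : b ≠ j := by
        rw [Finset.mem_range] at hb; omega
      rw [if_neg (fun hh => this hh.symm), mul_zero]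

lemma coeff_two (n j : ℕ) : (((1 : Polynomial ℤ) + 2*X)^n).coeff j = ((n.choose j * 2^j : ℕ) : ℤ) := by
  rw [exp_two, coeff_sum_CX]
  intro i hi
  simp [Nat.choose_eq_zero_of_lt hi]

lemma coeff_one_pow (n j : ℕ) : (((1 : Polynomial ℤ) + X)^n).coeff j = ((n.choose j : ℕ) : ℤ) := by
  rw [exp_one, coeff_sum_CX]
  intro i hi
  simp [Nat.choose_eq_zero_of_lt hi]

lemma key_sum (n : ℕ) (hn : 1 ≤ n) :
    (1 : Polynomial ℤ) + ∑ k ∈ Finset.Icc 1 n,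
        ((n.choose k * 2 ^ k + (n - 1).choose (k - 1) : ℕ) : Polynomial ℤ) * X ^ k
      = (1 + 2*X)^n + X * (1 + X)^(n-1) := by
  have hsp : ∀ k ∈ Finset.Icc 1 n,
      ((n.choose k * 2 ^ k + (n - 1).choose (k - 1) : ℕ) : Polynomial ℤ) * X ^ k
        = Polynomial.C ((n.choose k * 2^k : ℕ) : ℤ) * X^k
          + Polynomial.C (((n-1).choose (k-1) : ℕ) : ℤ) * X^k := by
    intro k _
    rw [Polynomial.C_eq_natCast, Polynomial.C_eq_natCast]
    push_cast
    ring
  rw [Finset.sum_congr rfl hsp, Finset.sum_add_distrib]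
  have h1 : (1 : Polynomial ℤ) + ∑ k ∈ Finset.Icc 1 n, Polynomial.C ((n.choose k * 2^k : ℕ) : ℤ) * X^k
      = (1 + 2*X)^n := by
    rw [exp_two]
    have hins : Finset.range (n+1) = insert 0 (Finset.Icc 1 n) := by
      ext x; simp only [Finset.mem_range, Finset.mem_insert, Finset.mem_Icc]; omega
    rw [hins, Finset.sum_insert (by simp)]
    simp
  have h2 : ∑ k ∈ Finset.Icc 1 n, Polynomial.C (((n-1).choose (k-1) : ℕ) : ℤ) * X^k
      = X * (1 + X)^(n-1) := by
    rw [exp_one, Finset.mul_sum]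
    rw [show Finset.Icc 1 n = Finset.Ico 1 (n+1) from (Finset.Ico_succ_right_eq_Icc 1 n).symm, Finset.sum_Ico_eq_sum_range]
    have hn' : n - 1 + 1 = n := by omega
    have hn'' : n + 1 - 1 = n := by omega
    rw [hn', hn'']
    refine Finset.sum_congr rfl (fun i _ => ?_)
    have h3 : 1 + i - 1 = i := by omega
    rw [h3, pow_add]
    ring
  calc (1 : Polynomial ℤ) + (∑ k ∈ Finset.Icc 1 n, Polynomial.C ((n.choose k * 2^k : ℕ) : ℤ) * X^k
        + ∑ k ∈ Finset.Icc 1 n, Polynomial.C (((n-1).choose (k-1) : ℕ) : ℤ) * X^k)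
      = (1 + ∑ k ∈ Finset.Icc 1 n, Polynomial.C ((n.choose k * 2^k : ℕ) : ℤ) * X^k)
        + ∑ k ∈ Finset.Icc 1 n, Polynomial.C (((n-1).choose (k-1) : ℕ) : ℤ) * X^k := by ring
    _ = (1 + 2*X)^n + X * (1 + X)^(n-1) := by rw [h1, h2]

lemma rhs_eq (n : ℕ) (hn : 1 ≤ n) :
    (1 + X) * ((1 : Polynomial ℤ) + ∑ k ∈ Finset.Icc 1 n,
        ((n.choose k * 2 ^ k + (n - 1).choose (k - 1) : ℕ) : Polynomial ℤ) * X ^ k)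
      = (1 + X) * (1 + 2*X)^n + X * (1 + X)^n := by
  rw [key_sum n hn, mul_add]
  have : ((1 : Polynomial ℤ) + X)^n = (1+X)^(n-1) * (1+X) := by
    rw [← pow_succ]
    congr 1
    omega
  rw [this]
  ring

lemma coeff_P_succ (n k : ℕ) :
    ((1 + X) * (1 + 2*X)^n + X * (1 + X)^n : Polynomial ℤ).coeff (k+1)
      = ((n.choose (k+1) * 2^(k+1) + n.choose k * 2^k + n.choose k : ℕ) : ℤ) := by
  have hre : ((1 + X) * (1 + 2*X)^n + X * (1 + X)^n : Polynomial ℤ)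
      = (1 + 2*X)^n + (X * (1 + 2*X)^n + X * (1 + X)^n) := by ring
  rw [hre, Polynomial.coeff_add, Polynomial.coeff_add, Polynomial.coeff_X_mul,
    Polynomial.coeff_X_mul, coeff_two, coeff_two, coeff_one_pow]
  push_cast
  ring

lemma coeff_P_zero (n : ℕ) :
    ((1 + X) * (1 + 2*X)^n + X * (1 + X)^n : Polynomial ℤ).coeff 0 = 1 := by
  have hre : ((1 + X) * (1 + 2*X)^n + X * (1 + X)^n : Polynomial ℤ)
      = (1 + 2*X)^n + (X * (1 + 2*X)^n + X * (1 + X)^n) := by ring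
  rw [hre, Polynomial.coeff_add, Polynomial.coeff_add, Polynomial.mul_coeff_zero,
    Polynomial.mul_coeff_zero, Polynomial.coeff_X_zero, coeff_two]
  simp

/-- for `n ≥ 2`,
`I(S_n;x) = (1+x)·(1 + Σ_{k=1}^n [C(n,k)·2^k + C(n−1,k−1)]·x^k)`, it is unimodal, and its
mode is unique and equals `1 + ((n−1) mod 3) + 2(⌈n/3⌉ − 1)`. -/

theorem stmt11 (n : ℕ) (hn : 2 ≤ n) :
    let m : ℕ := 1 + (n - 1) % 3 + 2 * ((n + 2) / 3 - 1)
    indepPoly (spider n) =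
      (1 + Polynomial.X) *
        (1 + ∑ k ∈ Finset.Icc 1 n,
          ((n.choose k * 2 ^ k + (n - 1).choose (k - 1) : ℕ) : Polynomial ℤ) *
            Polynomial.X ^ k) ∧
    (∀ i j : ℕ, i ≤ j → j ≤ m →
      (indepPoly (spider n)).coeff i ≤ (indepPoly (spider n)).coeff j) ∧
    (∀ i j : ℕ, m ≤ i → i ≤ j →
      (indepPoly (spider n)).coeff j ≤ (indepPoly (spider n)).coeff i) ∧
    (indepPoly (spider n)).coeff (m - 1) < (indepPoly (spider n)).coeff m ∧
    (indepPoly (spider n)).coeff (m + 1) < (indepPoly (spider n)).coeff m := by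
  intro m
  have hmdef : m = 1 + (n - 1) % 3 + 2 * ((n + 2) / 3 - 1) := rfl
  have hm : m = n - (n-1)/3 := by omega
  have hm2 : 2 ≤ m := by omega
  have hmn : m ≤ n := by omega
  have hP : indepPoly (spider n) = (1 + X) * (1 + 2*X)^n + X * (1 + X)^n := indepPoly_spider n
  have hc0 : (indepPoly (spider n)).coeff 0 = 1 := by rw [hP]; exact coeff_P_zero n
  have hcs : ∀ k, (indepPoly (spider n)).coeff (k+1)
      = ((n.choose (k+1) * 2^(k+1) + n.choose k * 2^k + n.choose k : ℕ) : ℤ) := by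
    intro k; rw [hP]; exact coeff_P_succ n k
  have step_up : ∀ k, k + 1 ≤ m → (indepPoly (spider n)).coeff k < (indepPoly (spider n)).coeff (k+1) := by
    intro k hk
    cases k with
    | zero =>
      rw [hc0, hcs 0]
      have h1 : (1 : ℕ) < n.choose 1 * 2^1 + n.choose 0 * 2^0 + n.choose 0 := by
        simp only [Nat.choose_one_right, Nat.choose_zero_right, pow_one, pow_zero, mul_one]
        omega
      exact_mod_cast h1
    | succ j =>
      rw [hcs j, hcs (j+1)]
      have hcond : 3*(j+1) ≤ 2*n := by omega
      have h1 := inc_lemma n j hcond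
      have h2 : n.choose (j+1) * 2^(j+1) + n.choose j * 2^j + n.choose j
          < n.choose (j+2) * 2^(j+2) + n.choose (j+1) * 2^(j+1) + n.choose (j+1) := by
        omega
      exact (Nat.cast_lt (α := ℤ)).mpr h2
  have step_down : ∀ k, m ≤ k + 1 → (indepPoly (spider n)).coeff (k+1+1) ≤ (indepPoly (spider n)).coeff (k+1) := by
    intro k hk
    rw [hcs k, hcs (k+1)]
    have hcond : 2*n + 1 ≤ 3*(k+1) := by omega
    have h1 := dec_lemma' n k hcond
    have h2 : n.choose (k+2) * 2^(k+2) + n.choose (k+1) * 2^(k+1) + n.choose (k+1)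
        ≤ n.choose (k+1) * 2^(k+1) + n.choose k * 2^k + n.choose k := by
      omega
    exact (Nat.cast_le (α := ℤ)).mpr h2
  have step_down_any : ∀ k, m ≤ k → (indepPoly (spider n)).coeff (k+1) ≤ (indepPoly (spider n)).coeff k := by
    intro k hk
    have hk1 : 1 ≤ k := by omega
    obtain ⟨j, rfl⟩ : ∃ j, k = j + 1 := ⟨k - 1, by omega⟩
    exact step_down j hk
  refine ⟨hP.trans (rhs_eq n (by omega)).symm, ?_, ?_, ?_, ?_⟩
  · -- increasing part
    have chain : ∀ d i : ℕ, i + d ≤ m →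
        (indepPoly (spider n)).coeff i ≤ (indepPoly (spider n)).coeff (i + d) := by
      intro d
      induction d with
      | zero => intro i _; simp
      | succ d ih =>
        intro i h
        have e : i + (d+1) = (i + d) + 1 := by omega
        rw [e]
        exact le_trans (ih i (by omega)) (le_of_lt (step_up (i+d) (by omega)))
    intro i j hij hjm
    have e : j = i + (j - i) := by omega
    rw [e]
    exact chain (j - i) i (by omega)
  · -- decreasing part
    have chain : ∀ d i : ℕ, m ≤ i →
        (indepPoly (spider n)).coeff (i + d) ≤ (indepPoly (spider n)).coeff i := by
      intro d
      induction d with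
      | zero => intro i _; simp
      | succ d ih =>
        intro i h
        have e : i + (d+1) = (i + d) + 1 := by omega
        rw [e]
        exact le_trans (step_down_any (i+d) (by omega)) (ih i h)
    intro i j him hij
    have e : j = i + (j - i) := by omega
    rw [e]
    exact chain (j - i) i him
  · -- strict at m from left
    have e : m - 1 + 1 = m := by omega
    have := step_up (m-1) (by omega)
    rwa [e] at this
  · -- strict at m from right
    have e1 : m - 1 + 1 = m := by omega
    have e2 : m - 1 + 1 + 1 = m + 1 := by omega
    have hcond : 2*n + 1 ≤ 3*(m-1+1) := by omega
    have hkn : m - 1 ≤ n := by omega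
    have h1 := dec_lemma n (m-1) hcond hkn
    have h2 : n.choose (m-1+2) * 2^(m-1+2) + n.choose (m-1+1) * 2^(m-1+1) + n.choose (m-1+1)
        < n.choose (m-1+1) * 2^(m-1+1) + n.choose (m-1) * 2^(m-1) + n.choose (m-1) := by
      omega
    have h3 : (indepPoly (spider n)).coeff (m-1+1+1) < (indepPoly (spider n)).coeff (m-1+1) := by
      rw [hcs (m-1), hcs (m-1+1)]
      exact (Nat.cast_lt (α := ℤ)).mpr h2
    rwa [e2, e1] at h3
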